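/- Let c : ℕ → ℝ≥0 satisfy Σₙ cₙ = 1 and Σₙ cₙ·n = k, and let p ∈ ℕ with p ≥ 4k ≥ 4. Then Σ_{n < p} cₙ·n(n-1) + (1/2)·Σ_{n ≥ p} cₙ·n·(p-1) ≥ k(k-1). -/

import Mathlib

/-- Let `c : ℕ → ℝ≥0` with `Σ cₙ = 1` and `Σ cₙ n = k`, and let `p ∈ ℕ` with `p ≥ 4k ≥ 4`.
Then `Σ_{n<p} cₙ n(n-1) + (1/2) Σ_{n≥p} cₙ n (p-1) ≥ k(k-1)`. -/
theorem cell_distribution_bound (c : ℕ → ℝ) (hc : ∀ n, 0 ≤ c n)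
    (hsum : Summable c) (h1 : ∑' n, c n = 1)
    (hsum2 : Summable fun n => c n * n) (k : ℝ) (hk : ∑' n, c n * n = k)
    (hk1 : 1 ≤ k) (p : ℕ) (hp : 4 * k ≤ (p : ℝ)) :
    k * (k - 1) ≤ (∑ n ∈ Finset.range p, c n * n * ((n : ℝ) - 1)) +
      (1 / 2) * ((p : ℝ) - 1) * ∑' n, (if p ≤ n then c n * n else 0) := by
  set t := ∑ n ∈ Finset.range p, c n * n with ht
  set s := ∑ n ∈ Finset.range p, c n with hs
  -- nonnegativity
  have hcn : ∀ n : ℕ, 0 ≤ c n * n := fun n => mul_nonneg (hc n) (Nat.cast_nonneg n)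
  -- t ≤ k
  have htk : t ≤ k := by
    rw [← hk]
    exact Summable.sum_le_tsum (Finset.range p) (fun n _ => hcn n) hsum2
  -- s ≤ 1
  have hs1 : s ≤ 1 := by
    rw [← h1]
    exact Summable.sum_le_tsum (Finset.range p) (fun n _ => hc n) hsum
  -- tail sum = k - t
  have htail : (∑' n, (if p ≤ n then c n * n else 0)) = k - t := by
    have hhead : ∀ n ∉ Finset.range p, (if p ≤ n then (0:ℝ) else c n * n) = 0 := by
      intro n hn
      simp only [Finset.mem_range, not_lt] at hn
      simp [hn]
    have hgsum : Summable (fun n => if p ≤ n then c n * n else 0) := by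
      apply hsum2.of_nonneg_of_le
      · intro n; split <;> simp [hcn n]
      · intro n; split <;> simp [hcn n]
    have hhsum : Summable (fun n => if p ≤ n then (0:ℝ) else c n * n) :=
      summable_of_ne_finset_zero hhead
    have hadd : (∑' n, ((if p ≤ n then c n * n else 0) + (if p ≤ n then (0:ℝ) else c n * n)))
        = ∑' n, c n * n := by
      congr 1; funext n; split <;> ring
    rw [Summable.tsum_add hgsum hhsum, hk] at hadd
    have hh : (∑' n, (if p ≤ n then (0:ℝ) else c n * n)) = t := by
      rw [tsum_eq_sum hhead, ht]
      apply Finset.sum_congr rfl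
      intro n hn
      simp only [Finset.mem_range] at hn
      simp [not_le.mpr hn]
    linarith
  -- Cauchy-Schwarz: t^2 ≤ s * Σ c n n^2
  have hCS : t ^ 2 ≤ s * ∑ n ∈ Finset.range p, c n * (n : ℝ) ^ 2 := by
    have := Finset.sum_mul_sq_le_sq_mul_sq (Finset.range p)
      (fun n => Real.sqrt (c n)) (fun n => Real.sqrt (c n) * n)
    have e1 : ∀ n ∈ Finset.range p,
        Real.sqrt (c n) * (Real.sqrt (c n) * n) = c n * n := by
      intro n _
      rw [← mul_assoc, Real.mul_self_sqrt (hc n)]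
    have e2 : ∀ n ∈ Finset.range p, Real.sqrt (c n) ^ 2 = c n := fun n _ =>
      Real.sq_sqrt (hc n)
    have e3 : ∀ n ∈ Finset.range p,
        (Real.sqrt (c n) * n) ^ 2 = c n * (n : ℝ) ^ 2 := by
      intro n _
      rw [mul_pow, Real.sq_sqrt (hc n)]
    rw [Finset.sum_congr rfl e1, Finset.sum_congr rfl e2, Finset.sum_congr rfl e3] at this
    exact this
  have hS2nonneg : 0 ≤ ∑ n ∈ Finset.range p, c n * (n : ℝ) ^ 2 :=
    Finset.sum_nonneg fun n _ => mul_nonneg (hc n) (sq_nonneg _)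
  have hCS' : t ^ 2 ≤ ∑ n ∈ Finset.range p, c n * (n : ℝ) ^ 2 := by
    calc t ^ 2 ≤ s * ∑ n ∈ Finset.range p, c n * (n : ℝ) ^ 2 := hCS
      _ ≤ 1 * ∑ n ∈ Finset.range p, c n * (n : ℝ) ^ 2 :=
          mul_le_mul_of_nonneg_right hs1 hS2nonneg
      _ = _ := one_mul _
  -- first sum ≥ t^2 - t
  have hfirst : t ^ 2 - t ≤ ∑ n ∈ Finset.range p, c n * n * ((n : ℝ) - 1) := by
    have : ∑ n ∈ Finset.range p, c n * n * ((n : ℝ) - 1)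
        = (∑ n ∈ Finset.range p, c n * (n : ℝ) ^ 2) - t := by
      rw [ht, ← Finset.sum_sub_distrib]
      apply Finset.sum_congr rfl
      intro n _; ring
    rw [this]
    linarith
  rw [htail]
  nlinarith [hfirst, htk, hk1, hp, sq_nonneg (t - k)]
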